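/- arXiv:1302.2178 — 2 statements merged into one kernel-verified Lean document; each statement's English description precedes it below -/
import Mathlib

section
/- The function f(x) = ((√x − √(N'/Q')·√(Q'−x))₊)² defined on [0, Q'] is convex and non-decreasing, where (·)₊ denotes the positive part. -/
open Set Filter Asymptotics

lemma psi_hasDerivAt (t : ℝ) :
    HasDerivAt (fun s : ℝ => max s 0 ^ 2) (2 * max t 0) t := by
  rcases lt_trichotomy t 0 with h | h | h
  · have hev : (fun s : ℝ => max s 0 ^ 2) =ᶠ[nhds t] fun _ => (0 : ℝ) := by
      filter_upwards [Iio_mem_nhds h] with s hs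
      simp [max_eq_right (le_of_lt (mem_Iio.mp hs))]
    have := (hasDerivAt_const t (0 : ℝ)).congr_of_eventuallyEq hev
    simpa [max_eq_right h.le] using this
  · subst h
    rw [hasDerivAt_iff_isLittleO]
    have h1 : (fun s : ℝ => max s 0 ^ 2) =O[nhds (0 : ℝ)] fun s => s ^ 2 := by
      apply IsBigO.of_bound 1
      filter_upwards with s
      have h2 : max s 0 ^ 2 ≤ s ^ 2 := by
        rcases le_total s 0 with hs | hs
        · simp [max_eq_right hs]; positivity
        · simp [max_eq_left hs]
      have h2' : |max s 0 ^ 2| ≤ 1 * |s ^ 2| := by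
        rw [one_mul, abs_of_nonneg (sq_nonneg (max s 0)), abs_of_nonneg (sq_nonneg s)]
        exact h2
      simpa [Real.norm_eq_abs] using h2'
    have h3 : (fun s : ℝ => s ^ 2) =o[nhds (0 : ℝ)] fun s => s :=
      isLittleO_pow_id (by norm_num)
    simpa using h1.trans_isLittleO h3
  · have hev : (fun s : ℝ => max s 0 ^ 2) =ᶠ[nhds t] fun s => s ^ 2 := by
      filter_upwards [Ioi_mem_nhds h] with s hs
      simp [max_eq_left (le_of_lt (mem_Ioi.mp hs))]
    have := (hasDerivAt_pow 2 t).congr_of_eventuallyEq hev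
    simpa [max_eq_left h.le, mul_comm] using this

theorem stmt1 (Q' N' : ℝ) (hQ : 0 < Q') (hN : 0 < N')
    (f : ℝ → ℝ)
    (hf : ∀ x, f x = (max (Real.sqrt x - Real.sqrt (N' / Q') * Real.sqrt (Q' - x)) 0) ^ 2) :
    ConvexOn ℝ (Set.Icc 0 Q') f ∧ MonotoneOn f (Set.Icc 0 Q') := by
  set c : ℝ := Real.sqrt (N' / Q') with hc_def
  have hc : 0 ≤ c := Real.sqrt_nonneg _
  set g : ℝ → ℝ := fun x => Real.sqrt x - c * Real.sqrt (Q' - x) with hg_def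
  set q : ℝ → ℝ := fun x => ((1 - c ^ 2) * x + c ^ 2 * Q') - 2 * c * Real.sqrt (x * (Q' - x))
    with hq_def
  set G : ℝ → ℝ := fun x => 1 / (2 * Real.sqrt x) + c * (1 / (2 * Real.sqrt (Q' - x)))
    with hG_def
  -- q = g^2 on Icc
  have hqg : ∀ x ∈ Icc (0 : ℝ) Q', q x = g x ^ 2 := by
    intro x hx
    obtain ⟨hx0, hxQ⟩ := hx
    have h1 : Real.sqrt x ^ 2 = x := Real.sq_sqrt hx0
    have h2 : Real.sqrt (Q' - x) ^ 2 = Q' - x := Real.sq_sqrt (by linarith)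
    have h3 : Real.sqrt (x * (Q' - x)) = Real.sqrt x * Real.sqrt (Q' - x) :=
      Real.sqrt_mul hx0 _
    simp only [hq_def, hg_def, h3]
    nlinarith [h1, h2]
  -- continuity of f
  have hfc : Continuous f := by
    have : f = fun x => max (g x) 0 ^ 2 := funext hf
    rw [this]
    fun_prop
  -- derivative of g on the interior
  have hgd : ∀ x ∈ Ioo (0 : ℝ) Q', HasDerivAt g (G x) x := by
    intro x hx
    obtain ⟨hx0, hxQ⟩ := hx
    have h1 : HasDerivAt Real.sqrt (1 / (2 * Real.sqrt x)) x :=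
      Real.hasDerivAt_sqrt (ne_of_gt hx0)
    have h2 : HasDerivAt (fun y : ℝ => Q' - y) (-1) x := by
      simpa using (hasDerivAt_id x).const_sub Q'
    have h3 : HasDerivAt (fun y : ℝ => Real.sqrt (Q' - y))
        (1 / (2 * Real.sqrt (Q' - x)) * (-1)) x :=
      (Real.hasDerivAt_sqrt (sub_pos.mpr hxQ).ne').comp x h2
    have := h1.sub (h3.const_mul c)
    refine this.congr_deriv ?_
    simp only [hG_def]
    ring
  have hGpos : ∀ x ∈ Ioo (0 : ℝ) Q', 0 ≤ G x := by
    intro x hx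
    have h1 : 0 ≤ Real.sqrt x := Real.sqrt_nonneg _
    have h2 : 0 ≤ Real.sqrt (Q' - x) := Real.sqrt_nonneg _
    simp only [hG_def]
    positivity
  -- derivative of f on the interior
  have hfd : ∀ x ∈ Ioo (0 : ℝ) Q', HasDerivAt f (max (2 * g x * G x) 0) x := by
    intro x hx
    have h1 : HasDerivAt (fun y => max (g y) 0 ^ 2) (2 * max (g x) 0 * G x) x := by
      have := (psi_hasDerivAt (g x)).comp x (hgd x hx)
      simpa [Function.comp_def, mul_comm, mul_assoc, mul_left_comm] using this
    have heq : f = fun y => max (g y) 0 ^ 2 := funext hf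
    rw [heq]
    convert h1 using 1
    have h2 : 0 ≤ 2 * G x := by linarith [hGpos x hx]
    rw [mul_assoc, mul_comm (g x) (G x), ← mul_assoc, mul_comm (2 * G x) (g x)]
    rw [show (0:ℝ) = 0 * (2 * G x) by ring, ← max_mul_of_nonneg _ _ h2]
    ring
  -- derivative of q on the interior
  have hqd : ∀ x ∈ Ioo (0 : ℝ) Q', HasDerivAt q (2 * g x * G x) x := by
    intro x hx
    have h1 : HasDerivAt (fun y => g y ^ 2) (2 * g x * G x) x := by
      have := (hgd x hx).pow 2
      refine this.congr_deriv ?_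
      ring
    have hev : q =ᶠ[nhds x] fun y => g y ^ 2 := by
      filter_upwards [Ioo_mem_nhds hx.1 hx.2] with y hy
      exact hqg y (Ioo_subset_Icc_self hy)
    exact h1.congr_of_eventuallyEq hev
  -- q is convex on Icc
  have hconc : ConcaveOn ℝ (Icc (0 : ℝ) Q') (fun x => Real.sqrt (x * (Q' - x))) := by
    constructor
    · exact convex_Icc _ _
    · intro x hx y hy a b ha hb hab
      simp only [smul_eq_mul]
      have hkx : (0:ℝ) ≤ x * (Q' - x) := mul_nonneg hx.1 (by linarith [hx.2])
      have hky : (0:ℝ) ≤ y * (Q' - y) := mul_nonneg hy.1 (by linarith [hy.2])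
      have hstep1 : a * Real.sqrt (x * (Q' - x)) + b * Real.sqrt (y * (Q' - y)) ≤
          Real.sqrt (a * (x * (Q' - x)) + b * (y * (Q' - y))) := by
        have := Real.strictConcaveOn_sqrt.concaveOn.2 (mem_Ici.2 hkx) (mem_Ici.2 hky) ha hb hab
        simpa [smul_eq_mul] using this
      have hstep2 : a * (x * (Q' - x)) + b * (y * (Q' - y)) ≤
          (a * x + b * y) * (Q' - (a * x + b * y)) := by
        have hb' : b = 1 - a := by linarith
        subst hb'
        nlinarith [mul_nonneg (mul_nonneg ha (by linarith : (0:ℝ) ≤ 1 - a)) (sq_nonneg (x - y))]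
      calc a * Real.sqrt (x * (Q' - x)) + b * Real.sqrt (y * (Q' - y)) ≤
            Real.sqrt (a * (x * (Q' - x)) + b * (y * (Q' - y))) := hstep1
        _ ≤ Real.sqrt ((a * x + b * y) * (Q' - (a * x + b * y))) :=
            Real.sqrt_le_sqrt hstep2
  have hqconv : ConvexOn ℝ (Icc (0 : ℝ) Q') q := by
    have haff : ConvexOn ℝ (Icc (0 : ℝ) Q') (fun x => (1 - c ^ 2) * x + c ^ 2 * Q') := by
      constructor
      · exact convex_Icc _ _
      · intro x hx y hy a b ha hb hab
        simp only [smul_eq_mul]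
        have hb' : b = 1 - a := by linarith
        subst hb'
        apply le_of_eq
        ring
    have hneg : ConvexOn ℝ (Icc (0 : ℝ) Q')
        (fun x => -(2 * c * Real.sqrt (x * (Q' - x)))) := by
      have := (hconc.smul (by linarith : (0:ℝ) ≤ 2 * c)).neg
      refine this.congr ?_
      intro x _
      simp [smul_eq_mul]
    have := haff.add hneg
    refine this.congr ?_
    intro x _
    simp only [hq_def, Pi.add_apply]
    ring
  -- monotonicity of deriv q on the interior
  have hqderiv : ∀ x ∈ Ioo (0 : ℝ) Q', deriv q x = 2 * g x * G x := fun x hx =>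
    (hqd x hx).deriv
  have hqmono : MonotoneOn (deriv q) (Ioo (0 : ℝ) Q') := by
    apply ConvexOn.monotoneOn_deriv
    · exact hqconv.subset Ioo_subset_Icc_self (convex_Ioo _ _)
    · exact fun x hx => (hqd x hx).differentiableAt
  -- deriv f = max (deriv q) 0 on interior
  have hfderiv : ∀ x ∈ Ioo (0 : ℝ) Q', deriv f x = max (deriv q x) 0 := by
    intro x hx
    rw [(hfd x hx).deriv, hqderiv x hx]
  have hicc : interior (Icc (0:ℝ) Q') = Ioo (0:ℝ) Q' := interior_Icc
  have hdiff : DifferentiableOn ℝ f (interior (Icc (0:ℝ) Q')) := by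
    rw [hicc]
    exact fun x hx => ((hfd x hx).differentiableAt).differentiableWithinAt
  constructor
  · apply MonotoneOn.convexOn_of_deriv (convex_Icc _ _) hfc.continuousOn hdiff
    rw [hicc]
    intro x hx y hy hxy
    rw [hfderiv x hx, hfderiv y hy]
    exact max_le_max (hqmono hx hy hxy) le_rfl
  · apply monotoneOn_of_deriv_nonneg (convex_Icc _ _) hfc.continuousOn hdiff
    rw [hicc]
    intro x hx
    rw [hfderiv x hx]
    exact le_max_right _ _
end

section
/- Let S = Ṽ + W with Ṽ, W uncorrelated zero-mean with variances Q', N'. Let Ŝ be any random variable, V̂ the best linear estimator of Ṽ given Ŝ, D' = Var(Ṽ − V̂) the corresponding MMSE, and D = Var(S − Ŝ). Then D ≥ ((√D' − √(N'/Q')·√(Q'−D'))₊)². -/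
open MeasureTheory ProbabilityTheory

lemma myMul {Ω : Type*} [MeasureSpace Ω] {f g : Ω → ℝ}
    (hf : MemLp f 2 (ℙ : Measure Ω)) (hg : MemLp g 2 (ℙ : Measure Ω)) :
    Integrable (fun ω => f ω * g ω) (ℙ : Measure Ω) := by
  have h1 : Integrable (fun ω => (f ω + g ω) ^ 2) ℙ := (hf.add hg).integrable_sq
  have h2 := hf.integrable_sq
  have h3 := hg.integrable_sq
  have := ((h1.sub h2).sub h3).div_const 2
  refine this.congr (Filter.Eventually.of_forall fun ω => by simp; ring)

lemma myExp {Ω : Type*} [MeasureSpace Ω] {f g : Ω → ℝ}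
    (hf : MemLp f 2 (ℙ : Measure Ω)) (hg : MemLp g 2 (ℙ : Measure Ω)) (c : ℝ) :
    ∫ ω, (f ω - c * g ω) ^ 2 = (∫ ω, f ω ^ 2) - 2 * c * (∫ ω, f ω * g ω)
      + c ^ 2 * ∫ ω, g ω ^ 2 := by
  have h1 : ∀ ω, (f ω - c * g ω) ^ 2
      = f ω ^ 2 - (2 * c) * (f ω * g ω) + c ^ 2 * g ω ^ 2 := fun ω => by ring
  have i1 : Integrable (fun ω => f ω ^ 2 - 2 * c * (f ω * g ω)) ℙ :=
    hf.integrable_sq.sub ((myMul hf hg).const_mul _)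
  have i2 : Integrable (fun ω => c ^ 2 * g ω ^ 2) ℙ := hg.integrable_sq.const_mul _
  simp_rw [h1]
  rw [integral_add i1 i2, integral_sub hf.integrable_sq ((myMul hf hg).const_mul _),
    integral_const_mul, integral_const_mul]

lemma myCS {Ω : Type*} [MeasureSpace Ω] {f g : Ω → ℝ}
    (hf : MemLp f 2 (ℙ : Measure Ω)) (hg : MemLp g 2 (ℙ : Measure Ω)) :
    (∫ ω, f ω * g ω) ^ 2 ≤ (∫ ω, f ω ^ 2) * ∫ ω, g ω ^ 2 := by
  set A := ∫ ω, f ω ^ 2 with hA'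
  set B := ∫ ω, f ω * g ω with hB'
  set C := ∫ ω, g ω ^ 2 with hC'
  have key : ∀ t : ℝ, 0 ≤ A - 2 * t * B + t ^ 2 * C := by
    intro t
    rw [hA', hB', hC', ← myExp hf hg t]
    exact integral_nonneg fun ω => sq_nonneg _
  have hA : 0 ≤ A := integral_nonneg fun ω => sq_nonneg _
  have hC : 0 ≤ C := integral_nonneg fun ω => sq_nonneg _
  rcases hC.eq_or_lt with hC0 | hC0
  · rcases eq_or_ne B 0 with hB | hB
    · rw [hB]; nlinarith
    · have h := key ((A + 1) / (2 * B))
      rw [← hC0, mul_zero, add_zero] at h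
      have h2 : 2 * ((A + 1) / (2 * B)) * B = A + 1 := by field_simp
      linarith
  · have h := key (B / C)
    have heq : A - 2 * (B / C) * B + (B / C) ^ 2 * C = A - B ^ 2 / C := by
      field_simp; ring
    rw [heq, sub_nonneg, div_le_iff₀ hC0] at h
    linarith

theorem stmt5 {Ω : Type*} [MeasureSpace Ω] [IsProbabilityMeasure (ℙ : Measure Ω)]
    (Q' N' : ℝ) (hQ : 0 < Q') (hN : 0 < N')
    (Vt W Sh : Ω → ℝ)
    (hVt2 : MemLp Vt 2 (ℙ : Measure Ω)) (hW2 : MemLp W 2 (ℙ : Measure Ω)) (hSh2 : MemLp Sh 2 (ℙ : Measure Ω))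
    (hVtm : ∫ ω, Vt ω = 0) (hWm : ∫ ω, W ω = 0) (hShm : ∫ ω, Sh ω = 0)
    (hVtv : ∫ ω, (Vt ω) ^ 2 = Q') (hWv : ∫ ω, (W ω) ^ 2 = N')
    (hunc : ∫ ω, Vt ω * W ω = 0)
    (a D' D : ℝ)
    (ha : a = (∫ ω, Vt ω * Sh ω) / (∫ ω, (Sh ω) ^ 2))
    (hD' : D' = ∫ ω, (Vt ω - a * Sh ω) ^ 2)
    (hD : D = ∫ ω, ((Vt ω + W ω) - Sh ω) ^ 2)
    (h1 : 0 < D') (h2 : D' < Q') :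
    D ≥ (max (Real.sqrt D' - Real.sqrt (N' / Q') * Real.sqrt (Q' - D')) 0) ^ 2 := by
  set c := ∫ ω, Vt ω * Sh ω with hc'
  set s2 := ∫ ω, (Sh ω) ^ 2 with hs2'
  set e := ∫ ω, W ω * Sh ω with he'
  have hs2nn : 0 ≤ s2 := integral_nonneg fun ω => sq_nonneg _
  -- expansion of D'
  have hD'exp : D' = Q' - 2 * a * c + a ^ 2 * s2 := by
    rw [hD', myExp hVt2 hSh2 a, hVtv]
  -- s2 > 0
  have hs2pos : 0 < s2 := by
    rcases hs2nn.eq_or_lt with h | h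
    · exfalso
      have ha0 : a = 0 := by rw [ha, ← h, div_zero]
      rw [ha0] at hD'exp
      simp at hD'exp
      linarith
    · exact h
  -- key identity
  have hkey : c ^ 2 = s2 * (Q' - D') := by
    rw [ha] at hD'exp
    have hs2ne : s2 ≠ 0 := hs2pos.ne'
    field_simp at hD'exp
    have h5 : (c ^ 2 - s2 * (Q' - D')) * s2 ^ 2 = 0 := by linear_combination s2 ^ 2 * hD'exp
    have h6 : s2 ^ 2 ≠ 0 := pow_ne_zero 2 hs2ne
    have := (mul_eq_zero.mp h5).resolve_right h6
    linarith
  -- expansion of D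
  have hVW2 : MemLp (fun ω => Vt ω + W ω) 2 (ℙ : Measure Ω) := hVt2.add hW2
  have hE1 := myExp hVW2 hSh2 1
  simp only [one_mul, one_pow] at hE1
  have hsum : ∫ ω, (Vt ω + W ω) ^ 2 = Q' + N' := by
    have h3 := myExp hVt2 hW2 (-1)
    simp only [neg_mul, one_mul, sub_neg_eq_add, neg_neg, neg_sq, one_pow] at h3
    rw [h3, hVtv, hWv, hunc]; ring
  have hcross : ∫ ω, (Vt ω + W ω) * Sh ω = c + e := by
    simp_rw [add_mul]
    rw [integral_add (myMul hVt2 hSh2) (myMul hW2 hSh2)]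
  have hDval : D = Q' + N' + s2 - 2 * c - 2 * e := by
    rw [hD, hE1, hsum, hcross, ← hs2']; ring
  -- Cauchy–Schwarz with the residual F = Sh - (c/Q') Vt
  have hF2 : MemLp (fun ω => Sh ω - (c / Q') * Vt ω) 2 (ℙ : Measure Ω) :=
    hSh2.sub (hVt2.const_mul _)
  have hShVt : ∫ ω, Sh ω * Vt ω = c := by
    rw [hc']; congr 1; funext ω; ring
  have hFsq : ∫ ω, (Sh ω - (c / Q') * Vt ω) ^ 2 = s2 - c ^ 2 / Q' := by
    rw [myExp hSh2 hVt2 (c / Q'), hShVt, hVtv, ← hs2']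
    field_simp; ring
  have hWF : ∫ ω, W ω * (Sh ω - (c / Q') * Vt ω) = e := by
    have hpt : ∀ ω, W ω * (Sh ω - (c / Q') * Vt ω)
        = W ω * Sh ω - (c / Q') * (Vt ω * W ω) := fun ω => by ring
    simp_rw [hpt]
    rw [integral_sub (myMul hW2 hSh2) ((myMul hVt2 hW2).const_mul _),
      integral_const_mul, hunc, ← he']
    ring
  have hCSe : e ^ 2 ≤ N' * (s2 - c ^ 2 / Q') := by
    have := myCS hW2 hF2
    rw [hWF, hWv, hFsq] at this
    exact this
  -- set up square roots
  set u := Real.sqrt s2 with hu'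
  set p := Real.sqrt (Q' - D') with hp'
  set r := Real.sqrt D' with hr'
  set n := Real.sqrt (N' / Q') with hn'
  have hu2 : u ^ 2 = s2 := Real.sq_sqrt hs2nn
  have hp2 : p ^ 2 = Q' - D' := Real.sq_sqrt (by linarith)
  have hr2 : r ^ 2 = D' := Real.sq_sqrt h1.le
  have hn2 : n ^ 2 = N' / Q' := Real.sq_sqrt (by positivity)
  have hunn : 0 ≤ u := Real.sqrt_nonneg _
  have hpnn : 0 ≤ p := Real.sqrt_nonneg _
  have hrnn : 0 ≤ r := Real.sqrt_nonneg _
  have hnnn : 0 ≤ n := Real.sqrt_nonneg _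
  -- c ≤ u * p
  have hcb : c ≤ u * p := by
    calc c ≤ |c| := le_abs_self c
    _ = Real.sqrt (c ^ 2) := (Real.sqrt_sq_eq_abs c).symm
    _ = Real.sqrt (s2 * (Q' - D')) := by rw [hkey]
    _ = u * p := Real.sqrt_mul hs2nn _
  -- e ≤ u * (n * r)
  have heb : e ≤ u * (n * r) := by
    have harg : N' * (s2 - c ^ 2 / Q') = s2 * (N' / Q' * D') := by
      rw [hkey]; field_simp; ring
    calc e ≤ |e| := le_abs_self e
    _ = Real.sqrt (e ^ 2) := (Real.sqrt_sq_eq_abs e).symm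
    _ ≤ Real.sqrt (s2 * (N' / Q' * D')) := by
        rw [← harg]; exact Real.sqrt_le_sqrt hCSe
    _ = u * (n * r) := by
        rw [Real.sqrt_mul hs2nn, Real.sqrt_mul (by positivity : (0:ℝ) ≤ N' / Q')]
  have hDnn : 0 ≤ D := by
    rw [hD]; exact integral_nonneg fun ω => sq_nonneg _
  clear hD' hD hE1 hsum hcross hWF hFsq hCSe hShVt hD'exp hVtv hWv hunc hVtm hWm hShm ha hc' hs2' he'
  clear hF2 hVW2 hVt2 hW2 hSh2
  clear_value c s2 e
  clear Vt W Sh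
  -- final algebra
  rcases le_total (r - n * p) 0 with hx | hx
  · rw [max_eq_right hx]
    simpa using hDnn
  · rw [max_eq_left hx]
    have hQ'eq : Q' = r ^ 2 + p ^ 2 := by linarith
    have hN'eq : N' = n ^ 2 * r ^ 2 + n ^ 2 * p ^ 2 := by
      have : n ^ 2 * Q' = N' := by rw [hn2]; field_simp
      nlinarith
    nlinarith [sq_nonneg (u - p - n * r), hcb, heb, hQ'eq, hN'eq, hDval]
end
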